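/- For every positive integer n and every r ∈ ℝ, |ξ_n'(r) + 2·max(−r,0)| ≤ 5/n; in particular the derivative ξ_n' converges uniformly on ℝ to the function r ↦ −2 r⁻ as n → ∞. -/

import Mathlib

/-- The auxiliary function from the proof of Lemma 5.1. -/
noncomputable def xiAux (r : ℝ) : ℝ :=
  if r ≤ 0 then r ^ 2 else if r ≤ 1 then r ^ 2 * (1 - r) ^ 3 else 0

/-- The rescaled auxiliary functions `ξ_n(r) = ξ(n r) / n²`. -/
noncomputable def xiAuxN (n : ℕ) (r : ℝ) : ℝ := xiAux (n * r) / (n : ℝ) ^ 2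

noncomputable def xiAux' (r : ℝ) : ℝ :=
  if r ≤ 0 then 2 * r else if r ≤ 1 then 2 * r * (1 - r) ^ 3 - 3 * r ^ 2 * (1 - r) ^ 2 else 0

lemma hasDerivAt_g (r : ℝ) :
    HasDerivAt (fun x : ℝ => x ^ 2 * (1 - x) ^ 3)
      (2 * r * (1 - r) ^ 3 - 3 * r ^ 2 * (1 - r) ^ 2) r := by
  have h1 : HasDerivAt (fun x : ℝ => x ^ 2) (2 * r) r := by
    simpa using hasDerivAt_pow 2 r
  have h2 : HasDerivAt (fun x : ℝ => (1 - x) ^ 3) (3 * (1 - r) ^ 2 * (-1)) r := by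
    have : HasDerivAt (fun x : ℝ => 1 - x) (-1) r := by
      simpa using (hasDerivAt_id r).const_sub 1
    simpa using this.fun_pow 3
  have := h1.fun_mul h2
  exact this.congr_deriv (by ring)

lemma hasDerivAt_xiAux (r : ℝ) : HasDerivAt xiAux (xiAux' r) r := by
  rcases lt_trichotomy r 0 with hr | hr | hr
  · have h : HasDerivAt (fun x : ℝ => x ^ 2) (2 * r) r := by
      simpa using hasDerivAt_pow 2 r
    have heq : xiAux =ᶠ[nhds r] (fun x : ℝ => x ^ 2) := by
      filter_upwards [Iio_mem_nhds hr] with x hx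
      have hx' : x ≤ 0 := le_of_lt (Set.mem_Iio.mp hx)
      simp [xiAux, hx']
    have := h.congr_of_eventuallyEq heq
    simpa [xiAux', hr.le] using this
  · subst hr
    have hleft : HasDerivWithinAt xiAux 0 (Set.Iic 0) 0 := by
      have h : HasDerivWithinAt (fun x : ℝ => x ^ 2) 0 (Set.Iic 0) 0 := by
        simpa using (hasDerivAt_pow 2 (0:ℝ)).hasDerivWithinAt
      refine h.congr (fun x hx => ?_) (by simp [xiAux])
      have hx' : x ≤ 0 := hx
      simp [xiAux, hx']
    have hright : HasDerivWithinAt xiAux 0 (Set.Ici 0) 0 := by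
      have h : HasDerivWithinAt (fun x : ℝ => x ^ 2 * (1 - x) ^ 3) 0 (Set.Ici 0) 0 := by
        simpa using (hasDerivAt_g 0).hasDerivWithinAt
      refine h.congr_of_eventuallyEq ?_ (by simp [xiAux])
      have hm : Set.Ico 0 1 ∈ nhdsWithin (0:ℝ) (Set.Ici 0) := by
        rw [show Set.Ico (0:ℝ) 1 = Set.Ici 0 ∩ Set.Iio 1 from rfl]
        exact Filter.inter_mem self_mem_nhdsWithin
          (mem_nhdsWithin_of_mem_nhds (Iio_mem_nhds one_pos))
      filter_upwards [hm] with x hx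
      rcases eq_or_lt_of_le hx.1 with h0 | h0
      · simp [xiAux, ← h0]
      · simp [xiAux, not_le.mpr h0, hx.2.le]
    have := hleft.union hright
    rw [Set.Iic_union_Ici] at this
    have h := this.hasDerivAt (by simp)
    simpa [xiAux'] using h
  · rcases lt_trichotomy r 1 with h1 | h1 | h1
    · have heq : xiAux =ᶠ[nhds r] (fun x : ℝ => x ^ 2 * (1 - x) ^ 3) := by
        filter_upwards [Ioo_mem_nhds hr h1] with x hx
        simp [xiAux, not_le.mpr hx.1, hx.2.le]
      have := (hasDerivAt_g r).congr_of_eventuallyEq heq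
      simpa [xiAux', not_le.mpr hr, h1.le] using this
    · subst h1
      have hleft : HasDerivWithinAt xiAux 0 (Set.Iic 1) 1 := by
        have h : HasDerivWithinAt (fun x : ℝ => x ^ 2 * (1 - x) ^ 3) 0 (Set.Iic 1) 1 := by
          have := (hasDerivAt_g 1).hasDerivWithinAt (s := Set.Iic 1)
          simpa using this
        refine h.congr_of_eventuallyEq ?_ (by norm_num [xiAux])
        have hm : Set.Ioc 0 1 ∈ nhdsWithin (1:ℝ) (Set.Iic 1) := by
          rw [show Set.Ioc (0:ℝ) 1 = Set.Ioi 0 ∩ Set.Iic 1 from rfl]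
          exact Filter.inter_mem (mem_nhdsWithin_of_mem_nhds (Ioi_mem_nhds one_pos))
            self_mem_nhdsWithin
        filter_upwards [hm] with x hx
        simp [xiAux, not_le.mpr hx.1, hx.2]
      have hright : HasDerivWithinAt xiAux 0 (Set.Ici 1) 1 := by
        have h : HasDerivWithinAt (fun _ : ℝ => (0:ℝ)) 0 (Set.Ici 1) 1 :=
          (hasDerivAt_const 1 (0:ℝ)).hasDerivWithinAt
        refine h.congr (fun x hx => ?_) (by norm_num [xiAux])
        rcases eq_or_lt_of_le (Set.mem_Ici.mp hx) with h0 | h0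
        · norm_num [xiAux, ← h0]
        · simp [xiAux, not_le.mpr (lt_trans one_pos h0), not_le.mpr h0]
      have := hleft.union hright
      rw [Set.Iic_union_Ici] at this
      have h := this.hasDerivAt (by simp)
      have : xiAux' 1 = 0 := by norm_num [xiAux']
      rw [this]; exact h
    · have heq : xiAux =ᶠ[nhds r] (fun _ : ℝ => (0:ℝ)) := by
        filter_upwards [Ioi_mem_nhds h1] with x hx
        simp [xiAux, not_le.mpr (lt_trans one_pos (Set.mem_Ioi.mp hx)), not_le.mpr (Set.mem_Ioi.mp hx)]
      have := (hasDerivAt_const r (0:ℝ)).congr_of_eventuallyEq heq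
      simpa [xiAux', not_le.mpr hr, not_le.mpr h1] using this

lemma hasDerivAt_xiAuxN (n : ℕ) (hn : 0 < n) (r : ℝ) :
    HasDerivAt (xiAuxN n) (xiAux' (n * r) / n) r := by
  have hn' : (n : ℝ) ≠ 0 := Nat.cast_ne_zero.mpr hn.ne'
  have hc : HasDerivAt (fun x : ℝ => (n : ℝ) * x) (n : ℝ) r := by
    simpa using (hasDerivAt_id r).const_mul (n : ℝ)
  have h := ((hasDerivAt_xiAux (n * r)).comp r hc).div_const ((n:ℝ) ^ 2)
  have heq : xiAux' (n * r) * n / (n:ℝ) ^ 2 = xiAux' (n * r) / n := by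
    field_simp
  rw [heq] at h
  exact h

lemma xiAux_bound (n : ℕ) (hn : 0 < n) (r : ℝ) :
    |xiAux' (n * r) / n + 2 * max (-r) 0| ≤ 5 / n := by
  have hn' : (0:ℝ) < n := Nat.cast_pos.mpr hn
  rcases le_or_gt r 0 with hr | hr
  · have hs : (n:ℝ) * r ≤ 0 := mul_nonpos_of_nonneg_of_nonpos hn'.le hr
    have hmax : max (-r) 0 = -r := max_eq_left (by linarith)
    rw [xiAux', if_pos hs, hmax]
    have : 2 * ((n:ℝ) * r) / n + 2 * -r = 0 := by field_simp; ring
    rw [this]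
    simp
    positivity
  · have hmax : max (-r) 0 = 0 := max_eq_right (by linarith)
    have hs0 : (0:ℝ) < (n:ℝ) * r := by positivity
    rw [hmax, mul_zero, add_zero, abs_div, abs_of_pos hn']
    gcongr
    rcases le_or_gt ((n:ℝ) * r) 1 with h1 | h1
    · set s := (n:ℝ) * r with hs
      rw [xiAux', if_neg (not_le.mpr hs0), if_pos h1]
      have ht0 : (0:ℝ) ≤ 1 - s := by linarith
      have hq1 : s ^ 2 ≤ 1 := by nlinarith
      have hq2 : (1 - s) ^ 2 ≤ 1 := by nlinarith
      have hq3 : (1 - s) ^ 3 ≤ 1 := by nlinarith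
      have e1 : 0 ≤ 2 * s * (1 - s) ^ 3 := by positivity
      have e2 : 3 * s ^ 2 * (1 - s) ^ 2 ≤ 3 := by nlinarith [sq_nonneg s, sq_nonneg (1-s)]
      have e3 : 2 * s * (1 - s) ^ 3 ≤ 2 := by nlinarith
      have e4 : 0 ≤ 3 * s ^ 2 * (1 - s) ^ 2 := by positivity
      rw [abs_le]
      constructor <;> linarith
    · rw [xiAux', if_neg (not_le.mpr hs0), if_neg (not_le.mpr h1)]
      norm_num

theorem stmt_8 :
    (∀ n : ℕ, 0 < n → ∀ r : ℝ, |deriv (xiAuxN n) r + 2 * max (-r) 0| ≤ 5 / (n : ℝ)) ∧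
    TendstoUniformly (fun (n : ℕ) (r : ℝ) => deriv (xiAuxN n) r)
      (fun r => -(2 * max (-r) 0)) Filter.atTop := by
  have key : ∀ n : ℕ, 0 < n → ∀ r : ℝ,
      |deriv (xiAuxN n) r + 2 * max (-r) 0| ≤ 5 / (n : ℝ) := by
    intro n hn r
    rw [(hasDerivAt_xiAuxN n hn r).deriv]
    exact xiAux_bound n hn r
  refine ⟨key, ?_⟩
  rw [Metric.tendstoUniformly_iff]
  intro ε hε
  obtain ⟨N, hN⟩ := exists_nat_gt (5 / ε)
  rw [Filter.eventually_atTop]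
  refine ⟨N + 1, fun n hn r => ?_⟩
  have hn0 : 0 < n := lt_of_lt_of_le (Nat.succ_pos N) hn
  have hnR : (0:ℝ) < n := Nat.cast_pos.mpr hn0
  have h5 : 5 / (n:ℝ) < ε := by
    rw [div_lt_iff₀ hnR]
    have : (N:ℝ) < n := by exact_mod_cast lt_of_lt_of_le (Nat.lt_succ_self N) hn
    have h1 : 5 / ε < (n:ℝ) := lt_trans hN this
    rw [div_lt_iff₀ hε] at h1
    linarith
  have := key n hn0 r
  rw [Real.dist_eq]
  calc |-(2 * max (-r) 0) - deriv (xiAuxN n) r|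
      = |deriv (xiAuxN n) r + 2 * max (-r) 0| := by rw [abs_sub_comm]; ring_nf
    _ ≤ 5 / n := this
    _ < ε := h5
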